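/- Let G be a connected graph with dim_ms(G) = 2 and let S be an outer multiset resolving set of G of cardinality 2. Then for every k ≥ 1, the set L_k(S) = {u ∈ V(G) : min_{x∈S} d_G(u,x) = k} satisfies |L_k(S)| ≤ 3. -/

import Mathlib

open SimpleGraph

/-- The multiset representation of `u` with respect to `S`: the multiset of
distances from `u` to the vertices of `S`, counted with multiplicity. -/
noncomputable def mrep {V : Type*} (G : SimpleGraph V) (u : V) (S : Finset V) : Multiset ℕ :=
  S.val.map fun w => G.dist u w

/-- `S` is an outer multiset resolving set of `G`: the multiset representations of
the vertices outside `S` are pairwise distinct. -/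
def IsOMR {V : Type*} (G : SimpleGraph V) (S : Finset V) : Prop :=
  ∀ u ∉ S, ∀ v ∉ S, mrep G u S = mrep G v S → u = v

/-- The outer multiset dimension of `G`. -/
noncomputable def dimMS {V : Type*} (G : SimpleGraph V) [Fintype V] : ℕ :=
  sInf {n | ∃ S : Finset V, S.card = n ∧ IsOMR G S}

/-- The diameter of `G`: the largest distance between vertices of `G`. -/
noncomputable def gdiam {V : Type*} (G : SimpleGraph V) [Fintype V] : ℕ :=
  Finset.univ.sup fun p : V × V => G.dist p.1 p.2

/-- `Lset G S k` is the set of vertices whose minimum distance to the set `S` equals `k`. -/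
def Lset {V : Type*} (G : SimpleGraph V) (S : Finset V) (k : ℕ) : Set V :=
  {u | sInf {d : ℕ | ∃ x ∈ S, G.dist u x = d} = k}

private lemma exists_near_vertex {V : Type*} (G : SimpleGraph V) (hconn : G.Connected)
    (x y : V) (h : 1 ≤ G.dist x y) :
    ∃ a, G.dist a x = 1 ∧ G.dist a y = G.dist x y - 1 := by
  obtain ⟨p, hp⟩ := (hconn x y).exists_walk_length_eq_dist
  have hnn : ¬ p.Nil := by rw [SimpleGraph.Walk.not_nil_iff_lt_length]; omega
  have hadj : G.Adj x (p.getVert 1) := by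
    simpa using p.adj_getVert_succ (by omega : 0 < p.length)
  refine ⟨p.getVert 1, ?_, ?_⟩
  · rw [SimpleGraph.dist_comm, SimpleGraph.dist_eq_one_iff_adj]; exact hadj
  · have h1 : G.dist (p.getVert 1) y ≤ p.length - 1 := by
      have : G.dist (p.getVert 1) y ≤ p.tail.length := SimpleGraph.dist_le p.tail
      have := SimpleGraph.Walk.length_tail_add_one hnn
      omega
    have h2 : G.dist x y ≤ G.dist x (p.getVert 1) + G.dist (p.getVert 1) y :=
      hconn.dist_triangle
    have h3 : G.dist x (p.getVert 1) = 1 := SimpleGraph.dist_eq_one_iff_adj.mpr hadj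
    omega

private lemma mrep_pair {V : Type*} [DecidableEq V] (G : SimpleGraph V) (u x y : V)
    (hxy : x ≠ y) : mrep G u {x, y} = {G.dist u x, G.dist u y} := by
  have hval : ({x, y} : Finset V).val = {x, y} := by
    rw [Finset.insert_val, Multiset.ndinsert_of_notMem (by simpa using hxy)]
    rfl
  simp [mrep, hval]

private lemma pair_eq_pair_of_min_sum {a b c d : ℕ} (hmin : min a b = min c d)
    (hsum : a + b = c + d) : ({a, b} : Multiset ℕ) = {c, d} := by
  have hmax : max a b = max c d := by
    have h1 : min a b + max a b = a + b := min_add_max a b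
    have h2 : min c d + max c d = c + d := min_add_max c d
    omega
  have key : ∀ e f : ℕ, ({e, f} : Multiset ℕ) = {min e f, max e f} := by
    intro e f
    rcases le_total e f with h | h
    · rw [min_eq_left h, max_eq_right h]
    · rw [min_eq_right h, max_eq_left h, Multiset.pair_comm]
  rw [key a b, key c d, hmin, hmax]

theorem stmt_8 (V : Type*) [Fintype V] (G : SimpleGraph V)
    (hconn : G.Connected) (hdim : dimMS G = 2) (S : Finset V)
    (hcard : S.card = 2) (hres : IsOMR G S) :
    ∀ k : ℕ, 1 ≤ k → (Lset G S k).ncard ≤ 3 := by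
  classical
  intro k hk
  obtain ⟨x, y, hxy, rfl⟩ := Finset.card_eq_two.mp hcard
  have hd1 : 1 ≤ G.dist x y := hconn.pos_dist_of_ne hxy
  -- Step 1: dist x y ≤ 2
  have hd2 : G.dist x y ≤ 2 := by
    by_contra hgt
    push_neg at hgt
    obtain ⟨a, hax, hay⟩ := exists_near_vertex G hconn x y hd1
    obtain ⟨b, hby, hbx⟩ := exists_near_vertex G hconn y x (by rwa [SimpleGraph.dist_comm])
    rw [SimpleGraph.dist_comm (u := y) (v := x)] at hbx
    have hd3 : 3 ≤ G.dist x y := hgt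
    have haS : a ∉ ({x, y} : Finset V) := by
      simp only [Finset.mem_insert, Finset.mem_singleton]
      rintro (rfl | rfl)
      · rw [SimpleGraph.dist_self] at hax; omega
      · rw [SimpleGraph.dist_self] at hay; omega
    have hbS : b ∉ ({x, y} : Finset V) := by
      simp only [Finset.mem_insert, Finset.mem_singleton]
      rintro (rfl | rfl)
      · rw [SimpleGraph.dist_self] at hbx; omega
      · rw [SimpleGraph.dist_self] at hby; omega
    have hab : mrep G a {x, y} = mrep G b {x, y} := by
      rw [mrep_pair G a x y hxy, mrep_pair G b x y hxy, hax, hay, hbx, hby,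
        Multiset.pair_comm]
    have : a = b := hres a haS b hbS hab
    rw [this, hbx] at hax
    omega
  -- membership characterization of Lset
  have hLmem : ∀ u, u ∈ Lset G {x, y} k ↔ min (G.dist u x) (G.dist u y) = k := by
    intro u
    have hset : {d : ℕ | ∃ s ∈ ({x, y} : Finset V), G.dist u s = d}
        = {G.dist u x, G.dist u y} := by
      ext d
      simp only [Set.mem_setOf_eq, Finset.mem_insert, Finset.mem_singleton,
        Set.mem_insert_iff, Set.mem_singleton_iff]
      constructor
      · rintro ⟨s, (rfl | rfl), rfl⟩
        · exact Or.inl rfl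
        · exact Or.inr rfl
      · rintro (rfl | rfl)
        · exact ⟨x, Or.inl rfl, rfl⟩
        · exact ⟨y, Or.inr rfl, rfl⟩
    simp only [Lset, Set.mem_setOf_eq, hset, csInf_pair]
  -- vertices of Lset are outside S
  have hnotS : ∀ u ∈ Lset G {x, y} k, u ∉ ({x, y} : Finset V) := by
    intro u hu hmem
    have hm := (hLmem u).mp hu
    have h1 : k ≤ G.dist u x := hm.symm.trans_le (min_le_left _ _)
    have h2 : k ≤ G.dist u y := hm.symm.trans_le (min_le_right _ _)
    simp only [Finset.mem_insert, Finset.mem_singleton] at hmem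
    rcases hmem with rfl | rfl
    · rw [SimpleGraph.dist_self] at h1; omega
    · rw [SimpleGraph.dist_self] at h2; omega
  -- Step 2: injection via the sum of distances
  have hle := Set.ncard_le_ncard_of_injOn (fun u => G.dist u x + G.dist u y)
    (s := Lset G {x, y} k) (t := Set.Icc (2 * k) (2 * k + 2)) ?_ ?_ (Set.finite_Icc _ _)
  · have : (Set.Icc (2 * k) (2 * k + 2)).ncard = 3 := by
      rw [← Finset.coe_Icc, Set.ncard_coe_finset, Nat.card_Icc]
      omega
    omega
  · intro u hu
    have hm := (hLmem u).mp hu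
    have t1 : G.dist u y ≤ G.dist u x + G.dist x y := hconn.dist_triangle
    have t2 : G.dist u x ≤ G.dist u y + G.dist y x := hconn.dist_triangle
    rw [SimpleGraph.dist_comm (u := y) (v := x)] at t2
    simp only [Set.mem_Icc]
    have e1 : k ≤ G.dist u x := hm.symm.trans_le (min_le_left _ _)
    have e2 : k ≤ G.dist u y := hm.symm.trans_le (min_le_right _ _)
    have e3 : G.dist u x = k ∨ G.dist u y = k := by
      rcases min_cases (G.dist u x) (G.dist u y) with ⟨h1, h2⟩ | ⟨h1, h2⟩
      · exact Or.inl (h1.symm.trans hm)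
      · exact Or.inr (h1.symm.trans hm)
    omega
  · intro u hu v hv hsum
    have hmu := (hLmem u).mp hu
    have hmv := (hLmem v).mp hv
    refine hres u (hnotS u hu) v (hnotS v hv) ?_
    rw [mrep_pair G u x y hxy, mrep_pair G v x y hxy]
    exact pair_eq_pair_of_min_sum (hmu.trans hmv.symm) hsum
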